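/- The set of derivations of the Leibniz algebra L₅ is a linear subspace of End(V) of dimension 5. -/
import Mathlib

/-- `V = ℂ⁴`. -/
abbrev V : Type := Fin 4 → ℂ

/-- standard basis: `e 0 = e₁`, ..., `e 3 = e₄`. -/
def e (i : Fin 4) : V := Pi.single i 1

/-- Bracket of the Leibniz algebra `L₅`:
`⟦e₁,e₁⟧ = e₃`, `⟦e₁,e₂⟧ = e₄`, `⟦e₃,e₁⟧ = e₄`, all other basis products zero. -/
def br (x y : V) : V :=
  (x 0 * y 0) • e 2 + (x 0 * y 1 + x 2 * y 0) • e 3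

/-- A derivation. -/
def IsDer (d : V →ₗ[ℂ] V) : Prop :=
  ∀ x y : V, d (br x y) = br (d x) y + br x (d y)

/-- The general derivation with parameters `p`. -/
def D (p : Fin 5 → ℂ) : V →ₗ[ℂ] V where
  toFun x := ![p 0 * x 0, p 1 * x 0 + 2 * p 0 * x 1, p 2 * x 0 + 2 * p 0 * x 2,
    p 3 * x 0 + p 4 * x 1 + (p 1 + p 2) * x 2 + 3 * p 0 * x 3]
  map_add' x y := by funext i; fin_cases i <;> simp <;> ring
  map_smul' c x := by funext i; fin_cases i <;> simp <;> ring

def phi : (Fin 5 → ℂ) →ₗ[ℂ] (V →ₗ[ℂ] V) where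
  toFun := D
  map_add' p q := by
    refine LinearMap.ext fun x => funext fun i => ?_
    fin_cases i <;> simp [D] <;> ring
  map_smul' c p := by
    refine LinearMap.ext fun x => funext fun i => ?_
    fin_cases i <;> simp [D] <;> ring

lemma D_isDer (p : Fin 5 → ℂ) : IsDer (D p) := by
  intro x y
  funext i
  fin_cases i <;> simp [D, br, e, Pi.single_apply] <;> ring

lemma br_e0_e0 : br (e 0) (e 0) = e 2 := by
  funext i; fin_cases i <;> simp [br, e, Pi.single_apply]
lemma br_e0_e1 : br (e 0) (e 1) = e 3 := by
  funext i; fin_cases i <;> simp [br, e, Pi.single_apply]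
lemma br_e2_e0 : br (e 2) (e 0) = e 3 := by
  funext i; fin_cases i <;> simp [br, e, Pi.single_apply]
lemma br_e1_e0 : br (e 1) (e 0) = 0 := by
  funext i; fin_cases i <;> simp [br, e, Pi.single_apply]

lemma isDer_eq_D (d : V →ₗ[ℂ] V) (hd : IsDer d) : ∃ p, D p = d := by
  refine ⟨![d (e 0) 0, d (e 0) 1, d (e 0) 2, d (e 0) 3, d (e 1) 3], ?_⟩
  have h00 := hd (e 0) (e 0); rw [br_e0_e0] at h00
  have h01 := hd (e 0) (e 1); rw [br_e0_e1] at h01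
  have h20 := hd (e 2) (e 0); rw [br_e2_e0] at h20
  have h10 := hd (e 1) (e 0); rw [br_e1_e0, map_zero] at h10
  have t1 := congrFun h10 2
  have t2 := congrFun h10 3
  have t3 := congrFun h00 0
  have t4 := congrFun h00 1
  have t5 := congrFun h00 2
  have t6 := congrFun h00 3
  have t7 := congrFun h01 0
  have t8 := congrFun h01 1
  have t9 := congrFun h01 2
  have t10 := congrFun h01 3
  have t11 := congrFun h20 3
  simp [br, e, Pi.single_apply] at t1 t2 t3 t4 t5 t6 t7 t8 t9 t10 t11
  have t12 : d (Pi.single 1 1) 1 = d (Pi.single 0 1) 0 + d (Pi.single 0 1) 0 := by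
    linear_combination t11 - t10 + t5
  have t13 : d (Pi.single 3 1) 3
      = d (Pi.single 0 1) 0 + d (Pi.single 0 1) 0 + d (Pi.single 0 1) 0 := by
    linear_combination t11 + t5
  have t14 : d (Pi.single 3 1) 2 = 0 := by linear_combination t9 - t1
  have hc0 : D ![d (e 0) 0, d (e 0) 1, d (e 0) 2, d (e 0) 3, d (e 1) 3] (e 0) = d (e 0) := by
    funext i; fin_cases i <;> simp [D, e, Pi.single_apply]
  have hc1 : D ![d (e 0) 0, d (e 0) 1, d (e 0) 2, d (e 0) 3, d (e 1) 3] (e 1) = d (e 1) := by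
    funext i; fin_cases i <;> simp [D, e, Pi.single_apply, ← t1, ← t2, t12] <;> ring
  have hc2 : D ![d (e 0) 0, d (e 0) 1, d (e 0) 2, d (e 0) 3, d (e 1) 3] (e 2) = d (e 2) := by
    funext i; fin_cases i <;> simp [D, e, Pi.single_apply, t3, t4, t5, t6] <;> ring
  have hc3 : D ![d (e 0) 0, d (e 0) 1, d (e 0) 2, d (e 0) 3, d (e 1) 3] (e 3) = d (e 3) := by
    funext i; fin_cases i <;> simp [D, e, Pi.single_apply, t7, t8, t14, t13] <;> ring
  refine LinearMap.ext fun x => ?_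
  have hx : x = x 0 • e 0 + x 1 • e 1 + x 2 • e 2 + x 3 • e 3 := by
    funext i; fin_cases i <;> simp [e, Pi.single_apply]
  rw [hx]
  simp only [map_add, map_smul, hc0, hc1, hc2, hc3]

lemma phi_inj : Function.Injective phi := by
  intro p q h
  funext i
  fin_cases i
  · have := congrFun (LinearMap.congr_fun h (e 0)) 0
    simpa [phi, D, e, Pi.single_apply] using this
  · have := congrFun (LinearMap.congr_fun h (e 0)) 1
    simpa [phi, D, e, Pi.single_apply] using this
  · have := congrFun (LinearMap.congr_fun h (e 0)) 2
    simpa [phi, D, e, Pi.single_apply] using this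
  · have := congrFun (LinearMap.congr_fun h (e 0)) 3
    simpa [phi, D, e, Pi.single_apply] using this
  · have := congrFun (LinearMap.congr_fun h (e 1)) 3
    simpa [phi, D, e, Pi.single_apply] using this

theorem derivations_of_L5 :
    ∃ S : Submodule ℂ (V →ₗ[ℂ] V),
      (S : Set (V →ₗ[ℂ] V)) = {d | IsDer d} ∧ Module.finrank ℂ S = 5 := by
  refine ⟨LinearMap.range phi, ?_, ?_⟩
  · ext d
    simp only [SetLike.mem_coe, LinearMap.mem_range, Set.mem_setOf_eq]
    constructor
    · rintro ⟨p, rfl⟩; exact D_isDer p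
    · intro hd; exact isDer_eq_D d hd
  · rw [LinearMap.finrank_range_of_inj phi_inj]
    simp
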